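/- The divisibility index of Ł_{n,k} (the largest d such that Ł_d embeds into Ł_{n,k}) equals gcd(n,k); in particular the divisibility index of Ł_n^∞ = Ł_{n,0} is n. -/

import Mathlib

/-- The interval `[0, u]` in a totally ordered abelian group: the universe of
the Wajsberg hoop `Γ(G, u)`. -/
def Gam {G : Type*} [AddCommGroup G] [LinearOrder G] [IsOrderedAddMonoid G] (u : G) : Type _ :=
  {x : G // 0 ≤ x ∧ x ≤ u}

/-- Product `a·b = max(a+b-u, 0)` of `Γ(G,u)`. -/
def hmul {G : Type*} [AddCommGroup G] [LinearOrder G] [IsOrderedAddMonoid G] {u : G} (a b : Gam u) : Gam u :=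
  ⟨max (a.1 + b.1 - u) 0, le_max_right _ _,
    max_le (sub_le_iff_le_add.mpr (add_le_add a.2.2 b.2.2)) (a.2.1.trans a.2.2)⟩

/-- Residuum `a→b = min(u-a+b, u)` of `Γ(G,u)`. -/
def himp {G : Type*} [AddCommGroup G] [LinearOrder G] [IsOrderedAddMonoid G] {u : G} (a b : Gam u) : Gam u :=
  ⟨min (u - a.1 + b.1) u,
    le_min (add_nonneg (sub_nonneg.mpr a.2.2) b.2.1) (a.2.1.trans a.2.2),
    min_le_right _ _⟩

/-- Top element (monoid unit) of `Γ(G,u)`. -/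
def hone {G : Type*} [AddCommGroup G] [LinearOrder G] [IsOrderedAddMonoid G] (u : G) (hu : 0 ≤ u) : Gam u :=
  ⟨u, hu, le_rfl⟩

/-- An embedding of hoops: an injective map preserving `·`, `→` and `1`. -/
structure IsHoopEmbedding {A B : Type*} (mA : A → A → A) (iA : A → A → A) (oA : A)
    (mB : B → B → B) (iB : B → B → B) (oB : B) (f : A → B) : Prop where
  inj : Function.Injective f
  map_mul : ∀ x y, f (mA x y) = mB (f x) (f y)
  map_imp : ∀ x y, f (iA x y) = iB (f x) (f y)
  map_one : f oA = oB

theorem lex_nonneg (a b : ℤ) (h : 0 < a) : (0 : ℤ ×ₗ ℤ) ≤ toLex (a, b) :=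
  Prod.Lex.le_iff.mpr (Or.inl h)

theorem part1 (n k : ℕ) (hn : 1 ≤ n) :
    (∃ f : Gam ((Nat.gcd n k : ℤ)) → Gam (toLex ((n : ℤ), (k : ℤ))),
        IsHoopEmbedding hmul himp (hone _ (Int.natCast_nonneg _))
          hmul himp (hone _ (lex_nonneg _ _ (by exact_mod_cast hn))) f) := by
  set g : ℕ := Nat.gcd n k with hgdef
  have hgpos : 0 < g := Nat.gcd_pos_of_pos_left k hn
  set p : ℕ := n / g with hpdef
  set q : ℕ := k / g with hqdef
  have hnp : (g : ℤ) * p = n := by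
    have h1 : g * p = n := Nat.mul_div_cancel' (Nat.gcd_dvd_left n k)
    exact_mod_cast h1
  have hkq : (g : ℤ) * q = k := by
    have h1 : g * q = k := Nat.mul_div_cancel' (Nat.gcd_dvd_right n k)
    exact_mod_cast h1
  have hppos : 0 < (p : ℤ) := by
    have : 0 < p := Nat.div_pos (Nat.le_of_dvd hn (Nat.gcd_dvd_left n k)) hgpos
    exact_mod_cast this
  set u : ℤ ×ₗ ℤ := toLex ((n : ℤ), (k : ℤ)) with hudef
  set φ : ℤ → ℤ ×ₗ ℤ := fun x => toLex (x * p, x * q) with hφdef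
  have hφmono : StrictMono φ := by
    intro a b h
    exact Prod.Lex.lt_iff.mpr (Or.inl (mul_lt_mul_of_pos_right h hppos))
  have hφ0 : φ 0 = 0 := by
    show toLex ((0:ℤ) * p, (0:ℤ) * q) = toLex ((0:ℤ), (0:ℤ))
    rw [zero_mul, zero_mul]
  have hφg : φ (g : ℤ) = u := by
    show toLex ((g:ℤ) * p, (g:ℤ) * q) = _
    rw [hnp, hkq]
  have hφsub : ∀ a b : ℤ, φ (a - b) = φ a - φ b := by
    intro a b
    show toLex ((a-b) * p, (a-b) * q) = toLex ((a*p - b*p : ℤ), (a*q - b*q : ℤ))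
    rw [sub_mul, sub_mul]
  have hφadd : ∀ a b : ℤ, φ (a + b) = φ a + φ b := by
    intro a b
    show toLex ((a+b) * p, (a+b) * q) = toLex ((a*p + b*p : ℤ), (a*q + b*q : ℤ))
    rw [add_mul, add_mul]
  refine ⟨fun x => ⟨φ x.1, ?_, ?_⟩, ?_, ?_, ?_, ?_⟩
  · show (0 : ℤ ×ₗ ℤ) ≤ φ x.1
    rw [← hφ0]; exact hφmono.monotone x.2.1
  · show φ x.1 ≤ u
    rw [← hφg]; exact hφmono.monotone x.2.2
  · intro a b h
    exact Subtype.ext (hφmono.injective (congrArg Subtype.val h))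
  · intro x y
    apply Subtype.ext
    show φ (max (x.1 + y.1 - g) 0) = max (φ x.1 + φ y.1 - u) 0
    rw [hφmono.monotone.map_max, hφ0, hφsub, hφadd, hφg]
  · intro x y
    apply Subtype.ext
    show φ (min ((g:ℤ) - x.1 + y.1) g) = min (u - φ x.1 + φ y.1) u
    rw [hφmono.monotone.map_min, hφg, hφadd, hφsub, hφg]
  · exact Subtype.ext hφg


theorem part2 (n k : ℕ) (hn : 1 ≤ n) (d : ℕ) (hd : 1 ≤ d)
    (hex : ∃ f : Gam ((d : ℤ)) → Gam (toLex ((n : ℤ), (k : ℤ))),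
        IsHoopEmbedding hmul himp (hone _ (Int.natCast_nonneg _))
          hmul himp (hone _ (lex_nonneg _ _ (by exact_mod_cast hn))) f) :
    d ≤ Nat.gcd n k := by
  set u : ℤ ×ₗ ℤ := toLex ((n : ℤ), (k : ℤ)) with hudef
  obtain ⟨f, hf⟩ := hex
  have hd1 : (1 : ℤ) ≤ (d : ℤ) := by exact_mod_cast hd
  -- value-congruence helper
  have fval : ∀ (a b : ℤ) (ha : 0 ≤ a ∧ a ≤ (d:ℤ)) (hb : 0 ≤ b ∧ b ≤ (d:ℤ)),
      a = b → (f ⟨a, ha⟩).1 = (f ⟨b, hb⟩).1 := by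
    rintro a b ha hb rfl; rfl
  -- the coatom and its image
  have hco : (0 : ℤ) ≤ (d:ℤ) - 1 ∧ (d:ℤ) - 1 ≤ (d:ℤ) := ⟨by linarith, by linarith⟩
  set y : ℤ ×ₗ ℤ := (f ⟨(d:ℤ) - 1, hco⟩).1 with hydef
  set y1 : ℤ := (ofLex y).1 with hy1def
  set y2 : ℤ := (ofLex y).2 with hy2def
  have hy : y = toLex (y1, y2) := rfl
  set z1 : ℤ := (n : ℤ) - y1 with hz1def
  set z2 : ℤ := (k : ℤ) - y2 with hz2def
  have hy0 : (0 : ℤ ×ₗ ℤ) ≤ y := (f ⟨(d:ℤ) - 1, hco⟩).2.1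
  have hyu : y ≤ u := (f ⟨(d:ℤ) - 1, hco⟩).2.2
  -- y ≠ u, by injectivity against the top
  have hyne : y ≠ u := by
    intro h
    have h1 : f ⟨(d:ℤ) - 1, hco⟩ = f (hone ((d:ℤ)) (Int.natCast_nonneg _)) := by
      rw [hf.map_one]
      exact Subtype.ext h
    have := hf.inj h1
    have h2 : (d:ℤ) - 1 = (d:ℤ) := congrArg Subtype.val this
    linarith
  -- main induction
  have key : ∀ m : ℕ, 1 ≤ m → m ≤ d →
      ∀ hb : 0 ≤ (d:ℤ) - (m:ℤ) ∧ (d:ℤ) - (m:ℤ) ≤ (d:ℤ),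
      (f ⟨(d:ℤ) - (m:ℤ), hb⟩).1 = toLex ((n:ℤ) - m * z1, (k:ℤ) - m * z2) := by
    intro m hm
    induction m, hm using Nat.le_induction with
    | base =>
      intro _ hb
      have : (f ⟨(d:ℤ) - ((1:ℕ):ℤ), hb⟩).1 = y := fval _ _ hb hco (by push_cast; ring)
      rw [this, hy]
      have e1 : (n:ℤ) - (1:ℕ) * z1 = y1 := by push_cast; rw [hz1def]; ring
      have e2 : (k:ℤ) - (1:ℕ) * z2 = y2 := by push_cast; rw [hz2def]; ring
      rw [e1, e2]
    | succ m hm ih =>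
      intro hmd hb
      have hmd' : m ≤ d := by omega
      have hmZ' : (m:ℤ) ≤ (d:ℤ) := by exact_mod_cast hmd'
      have hbm : 0 ≤ (d:ℤ) - (m:ℤ) ∧ (d:ℤ) - (m:ℤ) ≤ (d:ℤ) :=
        ⟨by linarith, by linarith [Int.natCast_nonneg m]⟩
      have hmZ : ((m:ℤ)+1) ≤ (d:ℤ) := by exact_mod_cast hmd
      -- the multiplication relation
      have hrel : hmul (⟨(d:ℤ) - (m:ℤ), hbm⟩ : Gam ((d:ℤ))) ⟨(d:ℤ) - 1, hco⟩
          = ⟨(d:ℤ) - ((m:ℕ)+1:ℕ), hb⟩ := by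
        apply Subtype.ext
        show max (((d:ℤ) - m) + ((d:ℤ) - 1) - d) 0 = (d:ℤ) - ((m:ℕ)+1:ℕ)
        rw [max_eq_left (by push_cast; linarith)]
        push_cast; ring
      have hval : (f ⟨(d:ℤ) - ((m:ℕ)+1:ℕ), hb⟩).1
          = max (toLex ((n:ℤ) - (m+1) * z1, (k:ℤ) - (m+1) * z2)) 0 := by
        rw [← hrel, hf.map_mul ⟨_, hbm⟩ ⟨_, hco⟩]
        show max ((f ⟨(d:ℤ) - (m:ℤ), hbm⟩).1 + y - u) 0 = _
        rw [ih hmd' hbm, hy]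
        congr 1
        show toLex (((n:ℤ) - m*z1) + y1 - n, ((k:ℤ) - m*z2) + y2 - k) = _
        rw [toLex_inj, Prod.mk.injEq]
        constructor
        · show _ = (n:ℤ) - (↑m+1) * z1
          rw [hz1def]; ring
        · show _ = (k:ℤ) - (↑m+1) * z2
          rw [hz2def]; ring
      set t : ℤ ×ₗ ℤ := toLex ((n:ℤ) - (m+1) * z1, (k:ℤ) - (m+1) * z2) with htdef
      have goal_eq : (f ⟨(d:ℤ) - ((m:ℕ)+1:ℕ), hb⟩).1 = t := by
        rcases le_total (0 : ℤ ×ₗ ℤ) t with h0 | h0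
        · rw [hval, max_eq_left h0]
        · -- truncation case: derive t = 0 via the residuum
          have hv0 : (f ⟨(d:ℤ) - ((m:ℕ)+1:ℕ), hb⟩).1 = 0 := by
            rw [hval, max_eq_right h0]
          -- himp relation: (d-1) → (d-(m+1)) = d-m
          have hrel2 : himp (⟨(d:ℤ) - 1, hco⟩ : Gam ((d:ℤ))) ⟨(d:ℤ) - ((m:ℕ)+1:ℕ), hb⟩
              = ⟨(d:ℤ) - (m:ℤ), hbm⟩ := by
            apply Subtype.ext
            show min ((d:ℤ) - ((d:ℤ) - 1) + ((d:ℤ) - ((m:ℕ)+1:ℕ))) d = (d:ℤ) - m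
            rw [min_eq_left (by push_cast; linarith [Int.natCast_nonneg m])]
            push_cast; ring
          have h3 : toLex ((n:ℤ) - m * z1, (k:ℤ) - m * z2) = min (u - y + 0) u := by
            rw [← ih hmd' hbm, ← hrel2, hf.map_imp ⟨_, hco⟩ ⟨_, hb⟩]
            show min (u - (f ⟨(d:ℤ) - 1, hco⟩).1 + (f ⟨(d:ℤ) - ((m:ℕ)+1:ℕ), hb⟩).1) u
              = min (u - y + 0) u
            rw [hv0]
          have h4 : min (u - y + 0) u = u - y := by
            rw [add_zero, min_eq_left (by simpa using hy0)]
          have h5 : toLex ((n:ℤ) - m * z1, (k:ℤ) - m * z2) = toLex (z1, z2) := by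
            rw [h3, h4, hudef, hy]
            rfl
          rw [toLex_inj, Prod.mk.injEq] at h5
          obtain ⟨h6, h7⟩ := h5
          have ht0 : t = 0 := by
            rw [htdef]
            show _ = toLex ((0:ℤ), (0:ℤ))
            rw [toLex_inj, Prod.mk.injEq]
            constructor <;> [linarith ; linarith]
          rw [hv0, ht0]
      exact goal_eq
  -- apply with m = d
  have hb0 : (0:ℤ) ≤ (d:ℤ) - (d:ℤ) ∧ (d:ℤ) - (d:ℤ) ≤ (d:ℤ) := ⟨by linarith, by linarith⟩
  have hw := key d hd le_rfl hb0
  set w : ℤ ×ₗ ℤ := (f ⟨(d:ℤ) - (d:ℤ), hb0⟩).1 with hwdef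
  -- idempotence of the bottom: 0·0 = 0
  have hrel0 : hmul (⟨(d:ℤ) - (d:ℤ), hb0⟩ : Gam ((d:ℤ))) ⟨(d:ℤ) - (d:ℤ), hb0⟩
      = ⟨(d:ℤ) - (d:ℤ), hb0⟩ := by
    apply Subtype.ext
    show max (((d:ℤ) - d) + ((d:ℤ) - d) - d) 0 = (d:ℤ) - d
    rw [max_eq_right (by linarith)]
    linarith
  have hww : w = max (w + w - u) 0 := by
    conv_lhs => rw [hwdef, ← hrel0, hf.map_mul ⟨_, hb0⟩ ⟨_, hb0⟩]
    rfl
  rcases le_total (0 : ℤ ×ₗ ℤ) (w + w - u) with h0 | h0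
  · -- this forces w = u, hence y = u: contradiction
    exfalso
    rw [max_eq_left h0] at hww
    have h1 : w + w - u = w + (w - u) := by ring
    rw [h1] at hww
    have h2 : w - u = 0 := (left_eq_add).mp hww
    have h3 : w = u := by
      have := sub_eq_zero.mp h2; exact this
    rw [hw, hudef] at h3
    rw [toLex_inj, Prod.mk.injEq] at h3
    obtain ⟨h4, h5⟩ := h3
    have hdz : (d:ℤ) ≠ 0 := by positivity
    have hz10 : z1 = 0 := by
      have : (d:ℤ) * z1 = 0 := by linarith
      rcases mul_eq_zero.mp this with h | h
      · exact absurd h hdz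
      · exact h
    have hz20 : z2 = 0 := by
      have : (d:ℤ) * z2 = 0 := by linarith
      rcases mul_eq_zero.mp this with h | h
      · exact absurd h hdz
      · exact h
    apply hyne
    rw [hy, hudef, toLex_inj, Prod.mk.injEq]
    constructor
    · rw [hz1def] at hz10; linarith
    · rw [hz2def] at hz20; linarith
  · -- w = 0, so u = d • z, so d ∣ n and d ∣ k
    rw [max_eq_right h0] at hww
    rw [hw] at hww
    have h1 : toLex ((n:ℤ) - d * z1, (k:ℤ) - d * z2) = toLex ((0:ℤ), (0:ℤ)) := hww
    rw [toLex_inj, Prod.mk.injEq] at h1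
    obtain ⟨h2, h3⟩ := h1
    have hdn : (d:ℤ) ∣ (n:ℤ) := ⟨z1, by linarith⟩
    have hdk : (d:ℤ) ∣ (k:ℤ) := ⟨z2, by linarith⟩
    have hdn' : d ∣ n := Int.natCast_dvd_natCast.mp hdn
    have hdk' : d ∣ k := Int.natCast_dvd_natCast.mp hdk
    exact Nat.le_of_dvd (Nat.gcd_pos_of_pos_left k hn) (Nat.dvd_gcd hdn' hdk')

/-- the divisibility index of `Ł_{n,k}` — the largest `d` such that the
finite chain `Ł_d` embeds into `Ł_{n,k}` — equals `gcd(n,k)` (in particular, for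
`Ł_n^∞ = Ł_{n,0}` it is `gcd(n,0) = n`). -/
theorem divisibility_index_Lnk (n k : ℕ) (hn : 1 ≤ n) :
    (∃ f : Gam ((Nat.gcd n k : ℤ)) → Gam (toLex ((n : ℤ), (k : ℤ))),
        IsHoopEmbedding hmul himp (hone _ (Int.natCast_nonneg _))
          hmul himp (hone _ (lex_nonneg _ _ (by exact_mod_cast hn))) f) ∧
    (∀ d : ℕ, 1 ≤ d →
      (∃ f : Gam ((d : ℤ)) → Gam (toLex ((n : ℤ), (k : ℤ))),
        IsHoopEmbedding hmul himp (hone _ (Int.natCast_nonneg _))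
          hmul himp (hone _ (lex_nonneg _ _ (by exact_mod_cast hn))) f) →
      d ≤ Nat.gcd n k) := by
  exact ⟨part1 n k hn, fun d hd hex => part2 n k hn d hd hex⟩
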